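/- Let $k \in [n]$ and let $\mathbf{x} = (x_1, \ldots, x_k)$ be $k$ distinct points on the unit circle. For an interval $I$ of the torus $\mathbb{R}/(2\pi)$, let $N_I(\mathbf{x})$ count the points with argument in $I$ and set $V_I(\mathbf{x}) = N_I(\mathbf{x}) - k|I|/(2\pi)$. Then $\sup_I |V_I(\mathbf{x})| - 4 \leq \frac{k}{\pi} d_\infty(\mathbf{x}, \boldsymbol{\Pi}_k) \leq 2\sup_I |V_I(\mathbf{x})| + 4$, where the supremum is over all closed intervals $I$ of the torus. -/

import Mathlib

open Real Finset

/-- Geodesic distance on the unit circle `Circle ⊆ ℂ`. -/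
noncomputable def gd (z w : Circle) : ℝ := |Complex.arg ((z : ℂ) / (w : ℂ))|

/-- Number of points of the configuration `x` lying in the closed arc of the
circle starting at angle `a` and of length `ℓ`. -/
noncomputable def NArc (k : ℕ) (x : Fin k → Circle) (a ℓ : ℝ) : ℕ :=
  Nat.card {i : Fin k // ∃ t ∈ Set.Icc (0 : ℝ) ℓ, x i = Circle.exp (a + t)}

/-- Discrepancy `V_I(x) = N_I(x) - k |I| / (2π)` of the arc of initial angle
`a` and length `ℓ`. -/
noncomputable def VArc (k : ℕ) (x : Fin k → Circle) (a ℓ : ℝ) : ℝ :=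
  (NArc k x a ℓ : ℝ) - k * ℓ / (2 * π)

/-- `d_∞` distance from a configuration to the set `Π_k` of regular
configurations. -/
noncomputable def dinftyPi (k : ℕ) (x : Fin k → Circle) : ℝ :=
  ⨅ σ : Equiv.Perm (Fin k), ⨆ i, gd (x i) (Circle.exp (2 * π * ((σ i : Fin k) : ℕ) / k))


open scoped Classical in
lemma count_upper (k : ℕ) (b L : ℝ) (hL : 0 ≤ L) :
    (((Finset.univ : Finset (Fin k)).filter
      (fun j : Fin k => ∃ u ∈ Set.Icc b (b + L), ∃ m : ℤ, (j : ℝ) = u + m * k)).card : ℝ) ≤ L + 1 := by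
  classical
  rcases le_or_gt (k : ℝ) L with hk | hk
  · calc ((Finset.filter _ _).card : ℝ) ≤ ((Finset.univ : Finset (Fin k)).card : ℝ) := by
          exact_mod_cast Finset.card_filter_le _ _
      _ = k := by simp
      _ ≤ L + 1 := by linarith
  · have hk0 : 0 < (k : ℝ) := lt_of_le_of_lt hL hk
    set f : Fin k → ℤ := fun j => (j : ℤ) - k * ⌊((j : ℝ) - b) / k⌋ with hf
    have key : ∀ j ∈ (Finset.univ : Finset (Fin k)).filter
        (fun j : Fin k => ∃ u ∈ Set.Icc b (b + L), ∃ m : ℤ, (j : ℝ) = u + m * k),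
        b ≤ (f j : ℝ) ∧ (f j : ℝ) ≤ b + L := by
      intro j hj
      simp only [Finset.mem_filter] at hj
      obtain ⟨-, u, hu, m, hm⟩ := hj
      have hfl : ⌊((j : ℝ) - b) / k⌋ = m := by
        have h1 : ((j : ℝ) - b) / k = (u - b) / k + m := by
          field_simp [hm]; linarith [hm]
        rw [h1, Int.floor_add_intCast, Int.floor_eq_zero_iff.2, zero_add]
        exact ⟨div_nonneg (by linarith [hu.1]) hk0.le,
          (div_lt_one hk0).2 (by linarith [hu.2])⟩
      have : (f j : ℝ) = u := by
        rw [hf]; push_cast [hfl]; linarith [hm]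
      rw [this]; exact ⟨hu.1, hu.2⟩
    have hcard : ((Finset.univ : Finset (Fin k)).filter
        (fun j : Fin k => ∃ u ∈ Set.Icc b (b + L), ∃ m : ℤ, (j : ℝ) = u + m * k)).card
        ≤ (Finset.Icc ⌈b⌉ ⌊b + L⌋).card := by
      apply Finset.card_le_card_of_injOn f
      · intro j hj
        obtain ⟨h1, h2⟩ := key j hj
        exact Finset.mem_Icc.2 ⟨Int.ceil_le.2 h1, Int.le_floor.2 h2⟩
      · intro j hj j' hj' heq
        have hd : (k : ℤ) ∣ (j : ℤ) - (j' : ℤ) := by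
          have : (j : ℤ) - (j' : ℤ) = k * (⌊((j : ℝ) - b) / k⌋ - ⌊((j' : ℝ) - b) / k⌋) := by
            have := heq; rw [hf] at this; simp only at this; linarith [this]
          exact ⟨_, this⟩
        have habs : |(j : ℤ) - (j' : ℤ)| < k := by
          rw [abs_lt]
          constructor <;> [have := j'.isLt; have := j.isLt] <;> omega
        have := Int.eq_zero_of_abs_lt_dvd hd habs
        have : (j : ℤ) = (j' : ℤ) := by omega
        exact Fin.ext (by exact_mod_cast this)
    have hIcc : ((Finset.Icc ⌈b⌉ ⌊b + L⌋).card : ℝ) ≤ L + 1 := by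
      rw [Int.card_Icc]
      rcases le_or_gt (⌊b + L⌋ + 1 - ⌈b⌉) 0 with h | h
      · rw [Int.toNat_of_nonpos h]; push_cast; linarith
      · have h2 := Int.toNat_of_nonneg h.le
        have h3 : ((⌊b + L⌋ + 1 - ⌈b⌉).toNat : ℝ) = ((⌊b + L⌋ : ℝ) + 1 - ⌈b⌉) := by
          exact_mod_cast congrArg (Int.cast : ℤ → ℝ) h2
        rw [h3]
        linarith [Int.floor_le (b + L), Int.le_ceil b]
    calc (_ : ℝ) ≤ ((Finset.Icc ⌈b⌉ ⌊b + L⌋).card : ℝ) := by exact_mod_cast hcard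
      _ ≤ L + 1 := hIcc

open scoped Classical in
lemma count_lower (k : ℕ) (hk : 0 < k) (b L : ℝ) (hL0 : 0 ≤ L) (hLk : L ≤ k) :
    L - 1 ≤ (((Finset.univ : Finset (Fin k)).filter
      (fun j : Fin k => ∃ u ∈ Set.Ico b (b + L), ∃ m : ℤ, (j : ℝ) = u + m * k)).card : ℝ) := by
  have hkZ : (0 : ℤ) < k := by exact_mod_cast hk
  have hceil : ⌈b + L⌉ ≤ ⌈b⌉ + k := by
    rw [show (⌈b⌉ + (k : ℤ)) = ⌈b⌉ + (k : ℕ) from rfl]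
    refine Int.ceil_le.2 ?_
    push_cast
    linarith [Int.le_ceil b]
  set g : ℤ → Fin k := fun z => ⟨(z % k).toNat, by
    have h1 := Int.emod_nonneg z (by exact_mod_cast hk.ne' : (k:ℤ) ≠ 0)
    have h2 := Int.emod_lt_of_pos z hkZ
    omega⟩ with hg
  have hcard : (Finset.Ico ⌈b⌉ ⌈b + L⌉).card ≤
      ((Finset.univ : Finset (Fin k)).filter
      (fun j : Fin k => ∃ u ∈ Set.Ico b (b + L), ∃ m : ℤ, (j : ℝ) = u + m * k)).card := by
    apply Finset.card_le_card_of_injOn g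
    · intro z hz
      rw [Finset.mem_coe, Finset.mem_Ico] at hz
      have hzb : b ≤ (z : ℝ) := le_trans (Int.le_ceil b) (by exact_mod_cast hz.1)
      have hzt : (z : ℝ) < b + L := Int.lt_ceil.1 hz.2
      simp only [Finset.mem_coe, Finset.mem_filter, Finset.mem_univ, true_and]
      refine ⟨(z : ℝ), ⟨hzb, hzt⟩, -(z / k), ?_⟩
      have h1 := Int.emod_nonneg z (by exact_mod_cast hk.ne' : (k:ℤ) ≠ 0)
      have hmod : ((g z : ℕ) : ℤ) = z - k * (z / k) := by
        rw [hg]; simp only [Int.toNat_of_nonneg h1]; rw [← Int.emod_def]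
      have h2 := congrArg (Int.cast : ℤ → ℝ) hmod
      push_cast at h2
      rw [h2]; push_cast; ring
    · intro z hz z' hz' heq
      simp only [Finset.coe_Ico, Set.mem_Ico] at hz hz'
      have hmm : z % k = z' % k := by
        have h3 := congrArg (fun j : Fin k => ((j : ℕ) : ℤ)) heq
        simp only [hg] at h3
        have h1 := Int.emod_nonneg z (by exact_mod_cast hk.ne' : (k:ℤ) ≠ 0)
        have h1' := Int.emod_nonneg z' (by exact_mod_cast hk.ne' : (k:ℤ) ≠ 0)
        omega
      have hd : (k : ℤ) ∣ z - z' :=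
        Int.dvd_of_emod_eq_zero (Int.emod_emod_of_dvd _ dvd_rfl ▸
          (Int.emod_eq_emod_iff_emod_sub_eq_zero.1 hmm))
      have habs : |z - z'| < k := by
        rw [abs_lt]; omega
      have := Int.eq_zero_of_abs_lt_dvd hd habs
      omega
  have hIco : L - 1 ≤ ((Finset.Ico ⌈b⌉ ⌈b + L⌉).card : ℝ) := by
    rw [Int.card_Ico]
    have h2 : ((⌈b + L⌉ - ⌈b⌉ : ℤ) : ℝ) ≤ ((⌈b + L⌉ - ⌈b⌉).toNat : ℝ) := by
      exact_mod_cast Int.self_le_toNat _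
    have h3 : L - 1 ≤ ((⌈b + L⌉ - ⌈b⌉ : ℤ) : ℝ) := by
      push_cast
      linarith [Int.le_ceil (b + L), Int.ceil_lt_add_one b]
    linarith
  calc L - 1 ≤ ((Finset.Ico ⌈b⌉ ⌈b + L⌉).card : ℝ) := hIco
    _ ≤ _ := by exact_mod_cast hcard

lemma abs_arg_exp_le (r : ℝ) : |Complex.arg (Circle.exp r)| ≤ |r| := by
  rcases le_or_gt (|r|) π with h | h
  · rcases eq_or_lt_of_le (abs_le.1 h).1 with h1 | h1
    · rw [← h1, ← Circle.exp_add_two_pi, Circle.arg_exp (by linarith [pi_pos]) (by linarith [pi_pos])]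
      have h2 : -π + 2*π = π := by ring
      rw [h2, abs_of_nonneg pi_pos.le, abs_of_nonpos (neg_nonpos.2 pi_pos.le)]
      linarith
    · rw [Circle.arg_exp h1 (abs_le.1 h).2]
  · exact le_of_lt (lt_of_le_of_lt (Complex.abs_arg_le_pi _) h)

lemma coe_div' (z w : Circle) : ((z / w : Circle) : ℂ) = (z : ℂ) / (w : ℂ) := by
  push_cast; ring

lemma gd_exp_le (u v : ℝ) : gd (Circle.exp u) (Circle.exp v) ≤ |u - v| := by
  have h : Circle.exp u / Circle.exp v = Circle.exp (u - v) := by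
    rw [div_eq_iff_eq_mul, ← Circle.exp_add]; ring_nf
  unfold gd
  rw [← coe_div', h]
  exact abs_arg_exp_le _

lemma gd_le_pi (z w : Circle) : gd z w ≤ π := Complex.abs_arg_le_pi _

lemma gd_nonneg (z w : Circle) : 0 ≤ gd z w := abs_nonneg _

lemma exp_rep (z w : Circle) : z = w * Circle.exp (Complex.arg ((z : ℂ) / (w : ℂ))) := by
  rw [← coe_div', Circle.exp_arg, mul_div_cancel]

open scoped Classical in
lemma NArc_eq_card (k : ℕ) (x : Fin k → Circle) (a ℓ : ℝ) :
    NArc k x a ℓ = ((Finset.univ : Finset (Fin k)).filter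
      (fun i => ∃ t ∈ Set.Icc (0 : ℝ) ℓ, x i = Circle.exp (a + t))).card := by
  rw [NArc, Nat.card_eq_fintype_card, Fintype.card_subtype]

lemma NArc_le (k : ℕ) (x : Fin k → Circle) (a ℓ : ℝ) : NArc k x a ℓ ≤ k := by
  classical
  rw [NArc_eq_card]
  exact le_trans (Finset.card_filter_le _ _) (by simp)

open scoped Classical in
lemma VArc_abs_le (k : ℕ) (hk : 1 ≤ k) (x : Fin k → Circle) (σ : Equiv.Perm (Fin k))
    (a ℓ : ℝ) (hℓ0 : 0 ≤ ℓ) (hℓ2 : ℓ ≤ 2 * π) :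
    |VArc k x a ℓ| ≤ (k : ℝ) / π *
      (⨆ i, gd (x i) (Circle.exp (2 * π * ((σ i : Fin k) : ℕ) / k))) + 1 := by
  classical
  have hπ : (0 : ℝ) < π := pi_pos
  have hk0 : (0 : ℝ) < k := by exact_mod_cast hk
  set δ : ℝ := ⨆ i, gd (x i) (Circle.exp (2 * π * ((σ i : Fin k) : ℕ) / k)) with hδdef
  have hbdd : BddAbove (Set.range fun i : Fin k =>
      gd (x i) (Circle.exp (2 * π * ((σ i : Fin k) : ℕ) / k))) := by
    refine ⟨π, ?_⟩; rintro _ ⟨i, rfl⟩; exact gd_le_pi _ _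
  have hδ : ∀ i, gd (x i) (Circle.exp (2 * π * ((σ i : Fin k) : ℕ) / k)) ≤ δ :=
    fun i => le_ciSup hbdd i
  have hδ0 : 0 ≤ δ := le_trans (gd_nonneg _ _) (hδ ⟨0, hk⟩)
  set e : Fin k → ℝ := fun i =>
    Complex.arg ((x i : ℂ) / ((Circle.exp (2 * π * ((σ i : Fin k) : ℕ) / k)) : ℂ)) with he
  have habs : ∀ i, |e i| ≤ δ := fun i => hδ i
  have hrep : ∀ i, x i = Circle.exp (2 * π * ((σ i : Fin k) : ℕ) / k + e i) := by
    intro i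
    rw [Circle.exp_add]
    exact exp_rep _ _
  have hup : (NArc k x a ℓ : ℝ) ≤ (k : ℝ) * ℓ / (2 * π) + (k : ℝ) * δ / π + 1 := by
    rw [NArc_eq_card]
    set b := (k : ℝ) * (a - δ) / (2 * π) with hb
    set L := (k : ℝ) * (ℓ + 2 * δ) / (2 * π) with hL
    have hLnn : 0 ≤ L := by positivity
    have hstep : ((Finset.univ : Finset (Fin k)).filter
        (fun i => ∃ t ∈ Set.Icc (0 : ℝ) ℓ, x i = Circle.exp (a + t))).card ≤
        ((Finset.univ : Finset (Fin k)).filter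
        (fun j : Fin k => ∃ u ∈ Set.Icc b (b + L), ∃ m : ℤ, (j : ℝ) = u + m * k)).card := by
      apply Finset.card_le_card_of_injOn σ
      · intro i hi
        simp only [Finset.mem_coe, Finset.mem_filter, Finset.mem_univ, true_and] at hi ⊢
        obtain ⟨t, ht, hxt⟩ := hi
        have h1 : Circle.exp (2 * π * ((σ i : Fin k) : ℕ) / k + e i) = Circle.exp (a + t) :=
          (hrep i).symm.trans hxt
        obtain ⟨m, hm⟩ := Circle.exp_eq_exp.1 h1
        refine ⟨(k : ℝ) * (a + t - e i) / (2 * π), ⟨?_, ?_⟩, m, ?_⟩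
        · rw [hb]
          gcongr <;> linarith [(abs_le.1 (habs i)).1, (abs_le.1 (habs i)).2, ht.1, ht.2]
        · rw [hb, hL, ← add_div, ← mul_add]
          gcongr <;> linarith [(abs_le.1 (habs i)).1, (abs_le.1 (habs i)).2, ht.1, ht.2]
        · field_simp at hm ⊢
          linarith [hm]
      · exact σ.injective.injOn
    have := count_upper k b L hLnn
    have hcalc : L + 1 = (k : ℝ) * ℓ / (2 * π) + (k : ℝ) * δ / π + 1 := by
      rw [hL]; field_simp
    calc ((Finset.filter _ _).card : ℝ) ≤ _ := by exact_mod_cast hstep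
      _ ≤ L + 1 := this
      _ = _ := hcalc
  have hlow : (k : ℝ) * ℓ / (2 * π) - (k : ℝ) * δ / π - 1 ≤ (NArc k x a ℓ : ℝ) := by
    rcases lt_or_ge ℓ (2 * δ) with hcase | hcase
    · have h1 : (k : ℝ) * ℓ / (2 * π) ≤ (k : ℝ) * δ / π := by
        rw [div_le_div_iff₀ (by positivity) hπ]
        nlinarith [mul_nonneg (mul_nonneg hk0.le hπ.le) (show (0:ℝ) ≤ 2*δ - ℓ by linarith)]
      have h2 : (0 : ℝ) ≤ (NArc k x a ℓ : ℝ) := Nat.cast_nonneg _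
      linarith
    · set b := (k : ℝ) * (a + δ) / (2 * π) with hb
      set L := (k : ℝ) * (ℓ - 2 * δ) / (2 * π) with hL
      have hLnn : 0 ≤ L := by
        rw [hL]; apply div_nonneg _ (by positivity); nlinarith
      have hLk : L ≤ (k : ℝ) := by
        rw [hL, div_le_iff₀ (by positivity)]
        nlinarith
      have hstep : ((Finset.univ : Finset (Fin k)).filter
          (fun j : Fin k => ∃ u ∈ Set.Ico b (b + L), ∃ m : ℤ, (j : ℝ) = u + m * k)).card ≤
          ((Finset.univ : Finset (Fin k)).filter
          (fun i => ∃ t ∈ Set.Icc (0 : ℝ) ℓ, x i = Circle.exp (a + t))).card := by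
        apply Finset.card_le_card_of_injOn σ.symm
        · intro j hj
          simp only [Finset.mem_coe, Finset.mem_filter, Finset.mem_univ, true_and] at hj ⊢
          obtain ⟨u, ⟨hu1, hu2⟩, m, hjm⟩ := hj
          set i := σ.symm j with hi
          have hσi : σ i = j := σ.apply_symm_apply j
          refine ⟨2 * π * u / k + e i - a, ⟨?_, ?_⟩, ?_⟩
          · have h1 : a + δ ≤ 2 * π * u / k := by
              rw [le_div_iff₀ hk0]
              rw [hb] at hu1
              rw [div_le_iff₀ (by positivity : (0:ℝ) < 2*π)] at hu1
              nlinarith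
            have := (abs_le.1 (habs i)).1
            linarith
          · have h2 : 2 * π * u / k < a + ℓ - δ := by
              rw [div_lt_iff₀ hk0]
              have hub : u < (k : ℝ) * (a + ℓ - δ) / (2 * π) := by
                rw [hb, hL] at hu2
                have : (k:ℝ) * (a + δ) / (2 * π) + (k:ℝ) * (ℓ - 2*δ) / (2 * π)
                    = (k : ℝ) * (a + ℓ - δ) / (2 * π) := by field_simp; ring
                linarith [this ▸ hu2]
              rw [lt_div_iff₀ (by positivity : (0:ℝ) < 2*π)] at hub
              nlinarith
            have := (abs_le.1 (habs i)).2
            linarith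
          · rw [hrep i, hσi]
            apply Circle.exp_eq_exp.2
            refine ⟨m, ?_⟩
            have : (2 : ℝ) * π * (j : ℕ) / k = 2 * π * u / k + m * (2 * π) := by
              rw [hjm]
              field_simp
            rw [this]; ring
        · exact σ.symm.injective.injOn
      have := count_lower k hk b L hLnn hLk
      have hcalc : L - 1 = (k : ℝ) * ℓ / (2 * π) - (k : ℝ) * δ / π - 1 := by
        rw [hL]; field_simp
      rw [NArc_eq_card]
      calc (k : ℝ) * ℓ / (2 * π) - (k : ℝ) * δ / π - 1 = L - 1 := hcalc.symm
        _ ≤ _ := this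
        _ ≤ _ := by exact_mod_cast hstep
  rw [VArc, abs_le]
  have heq : (k : ℝ) / π * δ = (k : ℝ) * δ / π := by ring
  constructor
  · rw [heq]; linarith
  · rw [heq]; linarith

/-- Equivalence between the arc discrepancy `sup_I |V_I(x)|` and the uniform
distance to the regular configurations (Lemma B.6 of the paper). -/
theorem stmt15 (n k : ℕ) (hk1 : 1 ≤ k) (hkn : k ≤ n)
    (x : Fin k → Circle) (hdist : Function.Injective x) :
    sSup {v : ℝ | ∃ a : ℝ, ∃ ℓ ∈ Set.Icc (0 : ℝ) (2 * π), v = |VArc k x a ℓ|} - 4 ≤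
        (k : ℝ) / π * dinftyPi k x ∧
    (k : ℝ) / π * dinftyPi k x ≤
      2 * sSup {v : ℝ | ∃ a : ℝ, ∃ ℓ ∈ Set.Icc (0 : ℝ) (2 * π), v = |VArc k x a ℓ|} + 4 := by
  classical
  have hπ : (0 : ℝ) < π := pi_pos
  have hk0 : (0 : ℝ) < k := by exact_mod_cast hk1
  haveI : Nonempty (Fin k) := ⟨⟨0, hk1⟩⟩
  set S := {v : ℝ | ∃ a : ℝ, ∃ ℓ ∈ Set.Icc (0 : ℝ) (2 * π), v = |VArc k x a ℓ|} with hSdef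
  have hSne : S.Nonempty := ⟨|VArc k x 0 0|, 0, 0, ⟨le_refl 0, by positivity⟩, rfl⟩
  have hSbdd : BddAbove S := by
    refine ⟨2 * k, ?_⟩
    rintro v ⟨a, ℓ, ⟨hℓ0, hℓ2⟩, rfl⟩
    have h1 : (NArc k x a ℓ : ℝ) ≤ k := by exact_mod_cast NArc_le k x a ℓ
    have h2 : (0 : ℝ) ≤ (k : ℝ) * ℓ / (2 * π) := by positivity
    have h3 : (k : ℝ) * ℓ / (2 * π) ≤ k := by
      rw [div_le_iff₀ (by positivity)]
      nlinarith
    have h4 : (0 : ℝ) ≤ (NArc k x a ℓ : ℝ) := Nat.cast_nonneg _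
    rw [VArc, abs_le]
    constructor <;> linarith
  set s := sSup S with hs
  have hs0 : 0 ≤ s :=
    le_trans (abs_nonneg _) (le_csSup hSbdd ⟨0, 0, ⟨le_refl 0, by positivity⟩, rfl⟩)
  constructor
  · -- part (1)
    have h1 : ∀ σ : Equiv.Perm (Fin k), s ≤ (k : ℝ) / π *
        (⨆ i, gd (x i) (Circle.exp (2 * π * ((σ i : Fin k) : ℕ) / k))) + 1 := by
      intro σ
      refine csSup_le hSne ?_
      rintro v ⟨a, ℓ, ⟨hℓ0, hℓ2⟩, rfl⟩
      exact VArc_abs_le k hk1 x σ a ℓ hℓ0 hℓ2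
    have h2 : ∀ σ : Equiv.Perm (Fin k), (s - 1) * π / k ≤
        ⨆ i, gd (x i) (Circle.exp (2 * π * ((σ i : Fin k) : ℕ) / k)) := by
      intro σ
      have h3 : s - 1 ≤ (k : ℝ) / π *
          (⨆ i, gd (x i) (Circle.exp (2 * π * ((σ i : Fin k) : ℕ) / k))) := by
        linarith [h1 σ]
      calc (s - 1) * π / k = (s - 1) * (π / k) := by ring
        _ ≤ ((k : ℝ) / π * (⨆ i, gd (x i) (Circle.exp (2 * π * ((σ i : Fin k) : ℕ) / k)))) * (π / k) :=
            mul_le_mul_of_nonneg_right h3 (by positivity)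
        _ = _ := by field_simp
    have h4 : (s - 1) * π / k ≤ dinftyPi k x := le_ciInf h2
    have h5 : (k : ℝ) / π * ((s - 1) * π / k) ≤ (k : ℝ) / π * dinftyPi k x :=
      mul_le_mul_of_nonneg_left h4 (by positivity)
    have h6 : (k : ℝ) / π * ((s - 1) * π / k) = s - 1 := by field_simp
    linarith [h6 ▸ h5]
  · -- part (2)
    set θ : Fin k → ℝ := fun i =>
      if Complex.arg (x i) < 0 then Complex.arg (x i) + 2 * π else Complex.arg (x i) with hθdef
    have hθx : ∀ i, x i = Circle.exp (θ i) := by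
      intro i
      rw [hθdef]
      by_cases h : Complex.arg (x i) < 0 <;>
        simp only [h, if_true, if_false, Circle.exp_add_two_pi, Circle.exp_arg, if_neg, if_pos] <;>
        rw [Circle.exp_arg]
    have hθmem : ∀ i, θ i ∈ Set.Ico 0 (2 * π) := by
      intro i
      rw [hθdef]
      have ha1 := Complex.neg_pi_lt_arg (x i)
      have ha2 := Complex.arg_le_pi (x i)
      by_cases h : Complex.arg (x i) < 0 <;> simp only [h, if_true, if_false] <;>
        constructor <;> first
          | linarith
          | (push_neg at h; linarith)
    have hθinj : Function.Injective θ := by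
      intro i j h
      exact hdist (by rw [hθx i, hθx j, h])
    set τ := Tuple.sort θ with hτ
    have hsm : StrictMono (θ ∘ τ) :=
      (Tuple.monotone_sort θ).strictMono_of_injective (hθinj.comp τ.injective)
    have hNarc : ∀ j : Fin k, NArc k x 0 (θ (τ j)) = (j : ℕ) + 1 := by
      intro j
      rw [NArc_eq_card]
      have hset : ((Finset.univ : Finset (Fin k)).filter
          (fun i => ∃ t ∈ Set.Icc (0:ℝ) (θ (τ j)), x i = Circle.exp (0 + t)))
          = (Finset.univ : Finset (Fin k)).filter (fun i => θ i ≤ θ (τ j)) := by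
        ext i
        simp only [Finset.mem_filter, Finset.mem_univ, true_and]
        constructor
        · rintro ⟨t, ⟨ht0, htj⟩, hxi⟩
          rw [zero_add] at hxi
          obtain ⟨m, hm⟩ := Circle.exp_eq_exp.1 ((hθx i).symm.trans hxi)
          have h1 := hθmem i
          have h2 := hθmem (τ j)
          have hm0 : m = 0 := by
            have hub : (m : ℝ) < 1 := by nlinarith [h1.2, h2.2, ht0, htj, hm, hπ]
            have hlb : (-1 : ℝ) < m := by nlinarith [h1.1, h2.2, ht0, htj, hm, hπ]
            have : (-1 : ℤ) < m := by exact_mod_cast hlb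
            have : m < (1 : ℤ) := by exact_mod_cast hub
            omega
          rw [hm0] at hm
          push_cast at hm
          have : θ i = t := by linarith [hm]
          linarith
        · intro h
          exact ⟨θ i, ⟨(hθmem i).1, h⟩, by rw [zero_add]; exact hθx i⟩
      rw [hset]
      have himg : (Finset.univ : Finset (Fin k)).filter (fun i => θ i ≤ θ (τ j))
          = Finset.image τ ((Finset.univ : Finset (Fin k)).filter (fun i => θ (τ i) ≤ θ (τ j))) := by
        ext i
        simp only [Finset.mem_image, Finset.mem_filter, Finset.mem_univ, true_and]
        constructor
        · intro h
          refine ⟨τ.symm i, ?_, τ.apply_symm_apply i⟩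
          rw [τ.apply_symm_apply]
          exact h
        · rintro ⟨w, hw, rfl⟩
          exact hw
      rw [himg, Finset.card_image_of_injective _ τ.injective]
      have hfil2 : (Finset.univ : Finset (Fin k)).filter (fun i => θ (τ i) ≤ θ (τ j))
          = (Finset.univ : Finset (Fin k)).filter (fun i => i ≤ j) := by
        ext i
        simp only [Finset.mem_filter, Finset.mem_univ, true_and]
        exact hsm.le_iff_le
      rw [hfil2]
      have : (Finset.univ : Finset (Fin k)).filter (fun i => i ≤ j) = Finset.Iic j := by
        ext i; simp
      rw [this, Fin.card_Iic]
    have hkey : ∀ j : Fin k, |θ (τ j) - 2 * π * ((j : ℕ) + 1) / k| ≤ 2 * π * s / k := by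
      intro j
      have hmem : |VArc k x 0 (θ (τ j))| ∈ S :=
        ⟨0, θ (τ j), ⟨(hθmem _).1, le_of_lt (hθmem _).2⟩, rfl⟩
      have h1 : |VArc k x 0 (θ (τ j))| ≤ s := le_csSup hSbdd hmem
      rw [VArc, hNarc j] at h1
      rw [abs_le] at h1 ⊢
      push_cast at h1
      obtain ⟨h1a, h1b⟩ := h1
      have heq1 : (2 * π / k) * (((j : ℕ) : ℝ) + 1 - (k : ℝ) * θ (τ j) / (2 * π))
          = 2 * π * (((j : ℕ) : ℝ) + 1) / k - θ (τ j) := by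
        field_simp
      have heq2 : (2 * π / k) * s = 2 * π * s / k := by ring
      constructor
      · have := mul_le_mul_of_nonneg_left h1b (by positivity : (0:ℝ) ≤ 2 * π / k)
        rw [heq1, heq2] at this
        linarith
      · have := mul_le_mul_of_nonneg_left h1a (by positivity : (0:ℝ) ≤ 2 * π / k)
        rw [mul_neg, heq1, heq2] at this
        linarith
    have hgd : ∀ i, gd (x i) (Circle.exp (2 * π * ((τ.symm i : Fin k) : ℕ) / k))
        ≤ 2 * π * s / k + 2 * π / k := by
      intro i
      have hij : i = τ (τ.symm i) := (τ.apply_symm_apply i).symm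
      set j := τ.symm i with hj
      calc gd (x i) (Circle.exp (2 * π * ((j : ℕ) : ℝ) / k))
          = gd (Circle.exp (θ (τ j))) (Circle.exp (2 * π * ((j : ℕ) : ℝ) / k)) := by
            rw [← hθx (τ j), ← hij]
        _ ≤ |θ (τ j) - 2 * π * ((j : ℕ) : ℝ) / k| := gd_exp_le _ _
        _ ≤ 2 * π * s / k + 2 * π / k := by
            have h2 := hkey j
            have heq : θ (τ j) - 2 * π * ((j : ℕ) : ℝ) / k
                = (θ (τ j) - 2 * π * (((j : ℕ) : ℝ) + 1) / k) + 2 * π / k := by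
              field_simp
              ring
            rw [heq]
            refine le_trans (abs_add_le _ _) ?_
            rw [abs_of_pos (by positivity : (0:ℝ) < 2 * π / k)]
            linarith [h2]
    have hsup : (⨆ i, gd (x i) (Circle.exp (2 * π * ((τ.symm i : Fin k) : ℕ) / k)))
        ≤ 2 * π * s / k + 2 * π / k := ciSup_le hgd
    have hbb : BddBelow (Set.range fun σ : Equiv.Perm (Fin k) =>
        ⨆ i, gd (x i) (Circle.exp (2 * π * ((σ i : Fin k) : ℕ) / k))) := by
      refine ⟨0, ?_⟩
      rintro _ ⟨σ, rfl⟩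
      have hbdd : BddAbove (Set.range fun i : Fin k =>
          gd (x i) (Circle.exp (2 * π * ((σ i : Fin k) : ℕ) / k))) := by
        refine ⟨π, ?_⟩; rintro _ ⟨i, rfl⟩; exact gd_le_pi _ _
      exact le_trans (gd_nonneg _ _) (le_ciSup hbdd ⟨0, hk1⟩)
    have hd : dinftyPi k x ≤ 2 * π * s / k + 2 * π / k :=
      le_trans (ciInf_le hbb (τ.symm : Equiv.Perm (Fin k))) hsup
    have h5 := mul_le_mul_of_nonneg_left hd (by positivity : (0:ℝ) ≤ (k:ℝ)/π)
    have h6 : (k:ℝ)/π * (2 * π * s / k + 2 * π / k) = 2 * s + 2 := by field_simp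
    rw [h6] at h5
    linarith
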